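/- arXiv:0711.3030 — 3 statements merged into one kernel-verified Lean document; each statement's English description precedes it below -/
import Mathlib

section
/- If κ is a regular uncountable cardinal, S ⊆ κ is stationary, and ⟨𝒜_α : α ∈ S⟩ is a ◊*_S-sequence (i.e. each 𝒜_α ⊆ 𝒫(α) has |𝒜_α| ≤ |α| and for every A ⊆ κ there is a club C ⊆ κ with A ∩ α ∈ 𝒜_α for all α ∈ C ∩ S), then ◊_S holds, i.e. there is a sequence ⟨A_α : α ∈ S⟩ with A_α ⊆ α such that for every A ⊆ κ the set {α ∈ S : A ∩ α = A_α} is stationary in κ. -/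
open Ordinal Set Cardinal

/-- `C` is a closed unbounded subset of the ordinal `o`. -/
def IsClubIn (o : Ordinal.{0}) (C : Set Ordinal) : Prop :=
  C ⊆ Set.Iio o ∧ (∀ a < o, ∃ b ∈ C, a ≤ b) ∧
  ∀ a < o, (C ∩ Set.Iio a).Nonempty → sSup (C ∩ Set.Iio a) = a → a ∈ C

/-- `S` is a stationary subset of the ordinal `o`. -/
def IsStatIn (o : Ordinal.{0}) (S : Set Ordinal) : Prop :=
  S ⊆ Set.Iio o ∧ ∀ C, IsClubIn o C → (S ∩ C).Nonempty

/-- The functional version of the diamond principle on `S ⊆ o`. -/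
def DiamondFun (o : Ordinal.{0}) (S : Set Ordinal) : Prop :=
  ∃ g : Ordinal → Ordinal → Ordinal,
    (∀ δ ∈ S, ∀ α < δ, g δ α < δ) ∧
    ∀ f : Ordinal → Ordinal, (∀ α < o, f α < o) →
      IsStatIn o {δ | δ ∈ S ∧ ∀ α < δ, f α = g δ α}

/-- The set version of the diamond principle on `S ⊆ o`. -/
def DiamondSet (o : Ordinal.{0}) (S : Set Ordinal) : Prop :=
  ∃ A : Ordinal → Set Ordinal,
    (∀ δ ∈ S, A δ ⊆ Set.Iio δ) ∧
    ∀ X, X ⊆ Set.Iio o → IsStatIn o {δ | δ ∈ S ∧ X ∩ Set.Iio δ = A δ}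

/-- The diamond-star principle on `S ⊆ o`. -/
def DiamondStar (o : Ordinal.{0}) (S : Set Ordinal) : Prop :=
  ∃ 𝒜 : Ordinal → Set (Set Ordinal),
    (∀ α ∈ S, (∀ X ∈ 𝒜 α, X ⊆ Set.Iio α) ∧
        Cardinal.mk ↥(𝒜 α) ≤ Cardinal.lift.{1} α.card) ∧
    ∀ X, X ⊆ Set.Iio o → ∃ C, IsClubIn o C ∧ ∀ α ∈ C ∩ S, X ∩ Set.Iio α ∈ 𝒜 α

/-- `D` is a (proper) filter on the set of ordinals below `o`. -/
def IsFilterOn (o : Ordinal.{0}) (D : Set (Set Ordinal.{0})) : Prop :=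
  (∀ A ∈ D, A ⊆ Set.Iio o) ∧ Set.Iio o ∈ D ∧ ∅ ∉ D ∧
  (∀ A ∈ D, ∀ B, B ⊆ Set.Iio o → A ⊆ B → B ∈ D) ∧
  (∀ A ∈ D, ∀ B ∈ D, A ∩ B ∈ D)

/-- `D` extends the club filter on `o`. -/
def ExtendsClubs (o : Ordinal.{0}) (D : Set (Set Ordinal.{0})) : Prop :=
  ∀ C, IsClubIn o C → C ∈ D

/-- `D` is `μ`-complete: closed under intersections of fewer than `μ` members. -/
def CompleteFor (μ : Cardinal.{0}) (o : Ordinal.{0}) (D : Set (Set Ordinal.{0})) : Prop :=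
  ∀ β : Ordinal, β.card < μ → ∀ s : Ordinal → Set Ordinal,
    (∀ i < β, s i ∈ D) → (Set.Iio o ∩ ⋂ i ∈ Set.Iio β, s i) ∈ D

/-- `S` is `D`-positive. -/
def DPos (o : Ordinal.{0}) (D : Set (Set Ordinal.{0})) (S : Set Ordinal) : Prop :=
  S ⊆ Set.Iio o ∧ (Set.Iio o \ S) ∉ D

/-- The filter `D + S`. -/
def DPlus (o : Ordinal.{0}) (D : Set (Set Ordinal.{0})) (S : Set Ordinal) : Set (Set Ordinal) :=
  {B | B ⊆ Set.Iio o ∧ B ∪ (Set.Iio o \ S) ∈ D}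

/-- The diamond principle for a filter `D` on `o`. -/
def DiamondFilter (o : Ordinal.{0}) (D : Set (Set Ordinal.{0})) : Prop :=
  ∃ S : Set Ordinal, DPos o D S ∧
    ∃ f : Ordinal → Ordinal → Ordinal,
      (∀ α ∈ S, ∀ β < α, f α β < o) ∧
      ∀ g : Ordinal → Ordinal, (∀ α < o, g α < o) →
        DPos o D {α | α ∈ S ∧ ∀ β < α, g β = f α β}

/-- `λ = o` has strong non-reflection for `S` in `κ`. -/
def SNR (o : Ordinal.{0}) (S : Set Ordinal) (κ : Cardinal.{0}) : Prop :=
  ∃ h : Ordinal → Ordinal, (∀ α < o, h α < κ.ord) ∧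
    ∃ E, IsClubIn o E ∧ ∀ δ ∈ S ∩ E, ∃ C, IsClubIn δ C ∧ StrictMonoOn h C

private lemma sSup_eq_of_cofinal {a : Ordinal} {s : Set Ordinal}
    (hs : s ⊆ Set.Iio a) (h : ∀ b < a, ∃ d ∈ s, b < d) (ha : 0 < a) :
    s.Nonempty ∧ sSup s = a := by
  obtain ⟨d0, hd0, _⟩ := h 0 ha
  have hne : s.Nonempty := ⟨d0, hd0⟩
  have hbdd : BddAbove s := ⟨a, fun x hx => (hs hx).le⟩
  refine ⟨hne, le_antisymm (csSup_le hne fun x hx => (hs hx).le) ?_⟩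
  by_contra hlt
  push_neg at hlt
  obtain ⟨d, hd, hd2⟩ := h (sSup s) hlt
  exact absurd (le_csSup hbdd hd) (not_le.mpr hd2)

private lemma main_club {κ : Cardinal.{0}} (hreg : κ.IsRegular) (hunc : ℵ₀ < κ)
    {C : Set Ordinal} (hC : IsClubIn κ.ord C)
    {q : Ordinal → Ordinal → Ordinal} (hq : ∀ ξ < κ.ord, ∀ β < κ.ord, q ξ β < κ.ord)
    {Cc : Ordinal → Set Ordinal} (hCc : ∀ ξ, IsClubIn κ.ord (Cc ξ)) :
    IsClubIn κ.ord
      {α | α < κ.ord ∧ α ∈ C ∧ (∀ ξ < α, ∀ β < α, q ξ β < α) ∧ ∀ ξ < α, α ∈ Cc ξ} := by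
  have hlim : Order.IsSuccLimit κ.ord := Cardinal.isSuccLimit_ord hreg.aleph0_le
  have hsucc : ∀ {x : Ordinal}, x < κ.ord → x + 1 < κ.ord := by
    intro x hx
    rw [Ordinal.add_one_eq_succ]
    exact hlim.succ_lt hx
  have hcard : ∀ {b : Ordinal}, b < κ.ord → b.card < κ.ord.cof := by
    intro b hb
    rw [hreg.cof_eq]
    exact Cardinal.lt_ord.mp hb
  have hCu : ∀ a : Ordinal, ∃ b, a < κ.ord → b ∈ C ∧ a ≤ b := by
    intro a
    by_cases h : a < κ.ord
    · obtain ⟨b, hb, hab⟩ := hC.2.1 a h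
      exact ⟨b, fun _ => ⟨hb, hab⟩⟩
    · exact ⟨0, fun h' => absurd h' h⟩
  choose cC hcC using hCu
  have hFu : ∀ (ξ a : Ordinal), ∃ b, a < κ.ord → b ∈ Cc ξ ∧ a ≤ b := by
    intro ξ a
    by_cases h : a < κ.ord
    · obtain ⟨b, hb, hab⟩ := (hCc ξ).2.1 a h
      exact ⟨b, fun _ => ⟨hb, hab⟩⟩
    · exact ⟨0, fun h' => absurd h' h⟩
  choose cF hcF using hFu
  set step : Ordinal → Ordinal := fun b =>
    max (max (cC b + 1) (b + 1))
      (max (Ordinal.bsup b fun ξ _ => cF ξ b + 1)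
        (Ordinal.bsup b fun ξ _ => Ordinal.bsup b fun β _ => q ξ β + 1)) with hstepdef
  have hstep_lt : ∀ b, b < κ.ord → step b < κ.ord := by
    intro b hb
    refine max_lt (max_lt (hsucc (hC.1 (hcC b hb).1)) (hsucc hb)) (max_lt ?_ ?_)
    · exact Ordinal.bsup_lt_ord (hcard hb) fun ξ hξ => hsucc ((hCc ξ).1 (hcF ξ b hb).1)
    · exact Ordinal.bsup_lt_ord (hcard hb) fun ξ hξ =>
        Ordinal.bsup_lt_ord (hcard hb) fun β hβ =>
          hsucc (hq ξ (hξ.trans hb) β (hβ.trans hb))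
  have hself : ∀ b : Ordinal, b < b + 1 := fun b => by
    rw [Ordinal.add_one_eq_succ]; exact Order.lt_succ b
  have hlt_step : ∀ b, b < step b := fun b =>
    lt_of_lt_of_le (hself b) (le_trans (le_max_right _ _) (le_max_left _ _))
  have hcC_lt : ∀ b, cC b < step b := fun b =>
    lt_of_lt_of_le (hself _) (le_trans (le_max_left _ _) (le_max_left _ _))
  have hcF_lt : ∀ b, ∀ ξ, ξ < b → cF ξ b < step b := fun b ξ hξ =>
    lt_of_lt_of_le (hself _)
      (le_trans (Ordinal.le_bsup _ ξ hξ) (le_trans (le_max_left _ _) (le_max_right _ _)))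
  have hq_lt : ∀ b, ∀ ξ, ξ < b → ∀ β, β < b → q ξ β < step b := fun b ξ hξ β hβ =>
    lt_of_lt_of_le (hself _)
      (le_trans (Ordinal.le_bsup _ β hβ)
        (le_trans (Ordinal.le_bsup (fun ξ _ => Ordinal.bsup b fun β _ => q ξ β + 1) ξ hξ)
          (le_trans (le_max_right _ _) (le_max_right _ _))))
  refine ⟨fun x hx => hx.1, ?_, ?_⟩
  · -- unboundedness
    intro a ha
    set seq : ℕ → Ordinal := fun n => step^[n] (a + 1) with hseqdef
    have hseq_zero : seq 0 = a + 1 := rfl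
    have hseq_succ : ∀ n, seq (n + 1) = step (seq n) := fun n =>
      Function.iterate_succ_apply' step n (a + 1)
    have hseq_lt : ∀ n, seq n < κ.ord := by
      intro n
      induction n with
      | zero => exact hsucc ha
      | succ n ih => rw [hseq_succ]; exact hstep_lt _ ih
    have hseq_mono : StrictMono seq := strictMono_nat_of_lt_succ fun n => by
      rw [hseq_succ]; exact hlt_step _
    have hbdd : BddAbove (Set.range seq) := ⟨κ.ord, by rintro _ ⟨n, rfl⟩; exact (hseq_lt n).le⟩
    set α := ⨆ n, seq n with hαdef
    have hseq_le : ∀ n, seq n ≤ α := fun n => le_ciSup hbdd n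
    have hαlt : α < κ.ord :=
      Ordinal.iSup_lt_ord (by rw [hreg.cof_eq, Cardinal.mk_nat]; exact hunc) hseq_lt
    have hlt_seq : ∀ {x : Ordinal}, x < α → ∃ n, x < seq n := fun {x} hx =>
      (lt_ciSup_iff hbdd).mp hx
    have ha_lt : a < α := lt_of_lt_of_le (hself a) (hseq_zero ▸ hseq_le 0)
    have hapos : 0 < α := lt_of_le_of_lt (zero_le (a := a)) ha_lt
    have hsucc_le : ∀ n, step (seq n) ≤ α := fun n => (hseq_succ n) ▸ hseq_le (n + 1)
    refine ⟨α, ⟨hαlt, ?_, ?_, ?_⟩, ha_lt.le⟩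
    · -- α ∈ C
      have hcof : ∀ b < α, ∃ d ∈ C ∩ Set.Iio α, b < d := by
        intro b hb
        obtain ⟨n, hn⟩ := hlt_seq hb
        refine ⟨cC (seq n), ⟨(hcC _ (hseq_lt n)).1, lt_of_lt_of_le (hcC_lt _) (hsucc_le n)⟩,
          lt_of_lt_of_le hn (hcC _ (hseq_lt n)).2⟩
      obtain ⟨hne, hsup⟩ := sSup_eq_of_cofinal (fun x hx => hx.2) hcof hapos
      exact hC.2.2 α hαlt hne hsup
    · -- closure under q
      intro ξ hξ β hβ
      obtain ⟨n, hn⟩ := hlt_seq hξ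
      obtain ⟨m, hm⟩ := hlt_seq hβ
      have h1 : ξ < seq (max n m) := hn.trans_le (hseq_mono.monotone (le_max_left n m))
      have h2 : β < seq (max n m) := hm.trans_le (hseq_mono.monotone (le_max_right n m))
      exact lt_of_lt_of_le (hq_lt _ ξ h1 β h2) (hsucc_le _)
    · -- membership in the Cc's
      intro ξ hξ
      obtain ⟨N, hN⟩ := hlt_seq hξ
      have hcof : ∀ b < α, ∃ d ∈ Cc ξ ∩ Set.Iio α, b < d := by
        intro b hb
        obtain ⟨n, hn⟩ := hlt_seq hb
        have hbk : b < seq (max n N) := hn.trans_le (hseq_mono.monotone (le_max_left n N))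
        have hξk : ξ < seq (max n N) := hN.trans_le (hseq_mono.monotone (le_max_right n N))
        refine ⟨cF ξ (seq (max n N)), ⟨(hcF ξ _ (hseq_lt _)).1,
          lt_of_lt_of_le (hcF_lt _ ξ hξk) (hsucc_le _)⟩,
          lt_of_lt_of_le hbk (hcF ξ _ (hseq_lt _)).2⟩
      obtain ⟨hne, hsup⟩ := sSup_eq_of_cofinal (fun x hx => hx.2) hcof hapos
      exact (hCc ξ).2.2 α hαlt hne hsup
  · -- closedness
    intro a ha hne hsup
    have hapos : 0 < a := by
      obtain ⟨d, _, hd⟩ := hne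
      exact lt_of_le_of_lt (zero_le (a := d)) hd
    have hcof : ∀ b < a, ∃ d, (d ∈ {α | α < κ.ord ∧ α ∈ C ∧ (∀ ξ < α, ∀ β < α, q ξ β < α) ∧
        ∀ ξ < α, α ∈ Cc ξ} ∩ Set.Iio a) ∧ b < d := by
      intro b hb
      obtain ⟨d, hd1, hd2⟩ := exists_lt_of_lt_csSup hne (by rw [hsup]; exact hb)
      exact ⟨d, hd1, hd2⟩
    refine ⟨ha, ?_, ?_, ?_⟩
    · have hcof' : ∀ b < a, ∃ d ∈ C ∩ Set.Iio a, b < d := by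
        intro b hb
        obtain ⟨d, ⟨hdW, hda⟩, hbd⟩ := hcof b hb
        exact ⟨d, ⟨hdW.2.1, hda⟩, hbd⟩
      obtain ⟨hne', hsup'⟩ := sSup_eq_of_cofinal (fun x hx => hx.2) hcof' hapos
      exact hC.2.2 a ha hne' hsup'
    · intro ξ hξ β hβ
      obtain ⟨d, ⟨hdW, hda⟩, hbd⟩ := hcof (max ξ β) (max_lt hξ hβ)
      exact lt_trans (hdW.2.2.1 ξ ((le_max_left ξ β).trans_lt hbd) β
        ((le_max_right ξ β).trans_lt hbd)) hda
    · intro ξ hξ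
      have hcof' : ∀ b < a, ∃ d ∈ Cc ξ ∩ Set.Iio a, b < d := by
        intro b hb
        obtain ⟨d, ⟨hdW, hda⟩, hbd⟩ := hcof (max b ξ) (max_lt hb hξ)
        exact ⟨d, ⟨hdW.2.2.2 ξ ((le_max_right b ξ).trans_lt hbd), hda⟩,
          (le_max_left b ξ).trans_lt hbd⟩
      obtain ⟨hne', hsup'⟩ := sSup_eq_of_cofinal (fun x hx => hx.2) hcof' hapos
      exact (hCc ξ).2.2 a ha hne' hsup'

private lemma exists_enum (𝒜 : Ordinal.{0} → Set (Set Ordinal.{0})) (α : Ordinal.{0})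
    (h : Cardinal.mk ↥(𝒜 α) ≤ Cardinal.lift.{1} α.card) :
    ∃ e : Ordinal → Set Ordinal, ∀ A ∈ 𝒜 α, ∃ ξ < α, e ξ = A := by
  classical
  by_cases hne : (𝒜 α).Nonempty
  · obtain ⟨A₀, hA₀⟩ := hne
    have h' : Cardinal.mk ↥(𝒜 α) ≤ Cardinal.mk ↥(Set.Iio α) := by
      rwa [Ordinal.mk_Iio_ordinal]
    obtain ⟨f⟩ := Cardinal.le_def _ _ |>.mp h'
    refine ⟨fun ξ => if h : ∃ A : ↥(𝒜 α), ((f A : Ordinal) = ξ) then (h.choose : Set Ordinal)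
      else A₀, ?_⟩
    intro A hA
    refine ⟨(f ⟨A, hA⟩ : Ordinal), (f ⟨A, hA⟩).2, ?_⟩
    have hex : ∃ B : ↥(𝒜 α), ((f B : Ordinal) = (f ⟨A, hA⟩ : Ordinal)) := ⟨⟨A, hA⟩, rfl⟩
    simp only [dif_pos hex]
    have h2 : hex.choose = ⟨A, hA⟩ := f.injective (Subtype.ext hex.choose_spec)
    rw [h2]
  · exact ⟨fun _ => ∅, fun A hA => absurd ⟨A, hA⟩ hne⟩

private lemma exists_pairing {κ : Cardinal.{0}} (hreg : κ.IsRegular) :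
    ∃ q : Ordinal → Ordinal → Ordinal,
      (∀ ξ < κ.ord, ∀ β < κ.ord, q ξ β < κ.ord) ∧
      ∀ ξ β ξ' β', ξ < κ.ord → β < κ.ord → ξ' < κ.ord → β' < κ.ord →
        q ξ β = q ξ' β' → ξ = ξ' ∧ β = β' := by
  classical
  have hmk : Cardinal.mk ↥(Set.Iio κ.ord) = Cardinal.lift.{1} κ := by
    rw [Ordinal.mk_Iio_ordinal, Cardinal.card_ord]
  have h1 : Cardinal.mk (↥(Set.Iio κ.ord) × ↥(Set.Iio κ.ord)) = Cardinal.mk ↥(Set.Iio κ.ord) := by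
    rw [Cardinal.mk_prod, hmk, Cardinal.lift_id, Cardinal.mul_eq_self
      (Cardinal.aleph0_le_lift.mpr hreg.aleph0_le)]
  obtain ⟨eqv⟩ := Cardinal.eq.mp h1
  refine ⟨fun ξ β => if h : ξ < κ.ord ∧ β < κ.ord then
    ((eqv (⟨ξ, h.1⟩, ⟨β, h.2⟩) : Ordinal)) else 0, ?_, ?_⟩
  · intro ξ hξ β hβ
    dsimp only
    rw [dif_pos (⟨hξ, hβ⟩ : ξ < κ.ord ∧ β < κ.ord)]
    exact (eqv (⟨ξ, hξ⟩, ⟨β, hβ⟩)).2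
  · intro ξ β ξ' β' hξ hβ hξ' hβ' heq
    dsimp only at heq
    rw [dif_pos (⟨hξ, hβ⟩ : ξ < κ.ord ∧ β < κ.ord),
      dif_pos (⟨hξ', hβ'⟩ : ξ' < κ.ord ∧ β' < κ.ord)] at heq
    have := eqv.injective (Subtype.ext heq)
    have h1 := congrArg Prod.fst this
    have h2 := congrArg Prod.snd this
    exact ⟨congrArg Subtype.val h1, congrArg Subtype.val h2⟩

theorem stmt0 (κ : Cardinal.{0}) (hreg : κ.IsRegular) (hunc : ℵ₀ < κ)
    (S : Set Ordinal) (hS : IsStatIn κ.ord S)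
    (𝒜 : Ordinal → Set (Set Ordinal))
    (h𝒜 : ∀ α ∈ S, (∀ X ∈ 𝒜 α, X ⊆ Set.Iio α) ∧
        Cardinal.mk ↥(𝒜 α) ≤ Cardinal.lift.{1} α.card)
    (hguess : ∀ X, X ⊆ Set.Iio κ.ord →
        ∃ C, IsClubIn κ.ord C ∧ ∀ α ∈ C ∩ S, X ∩ Set.Iio α ∈ 𝒜 α) :
    DiamondSet κ.ord S := by
  classical
  by_contra hcon
  -- an enumeration of each family 𝒜 α
  have henum : ∀ α : Ordinal, ∃ e : Ordinal → Set Ordinal,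
      α ∈ S → ∀ A ∈ 𝒜 α, ∃ ξ < α, e ξ = A := by
    intro α
    by_cases hα : α ∈ S
    · obtain ⟨e, he⟩ := exists_enum 𝒜 α (h𝒜 α hα).2
      exact ⟨e, fun _ => he⟩
    · exact ⟨fun _ => ∅, fun h => absurd h hα⟩
  choose e he using henum
  obtain ⟨q, hqlt, hqinj⟩ := exists_pairing hreg
  -- the candidate diamond sequences
  set B : Ordinal → Ordinal → Set Ordinal := fun ξ δ => {β | β < δ ∧ q ξ β ∈ e δ ξ} with hB
  -- each of them fails, with witnesses
  have hfail : ∀ ξ : Ordinal, ∃ X Cξ, X ⊆ Set.Iio κ.ord ∧ IsClubIn κ.ord Cξ ∧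
      ∀ δ, δ ∈ S → X ∩ Set.Iio δ = B ξ δ → δ ∉ Cξ := by
    intro ξ
    have h1 : ¬ ((∀ δ ∈ S, B ξ δ ⊆ Set.Iio δ) ∧
        ∀ X, X ⊆ Set.Iio κ.ord → IsStatIn κ.ord {δ | δ ∈ S ∧ X ∩ Set.Iio δ = B ξ δ}) :=
      fun h => hcon ⟨B ξ, h⟩
    have h2 : ∀ δ ∈ S, B ξ δ ⊆ Set.Iio δ := fun δ _ β hβ => hβ.1
    push_neg at h1
    obtain ⟨X, hX1, hX2⟩ := h1 h2
    rw [IsStatIn] at hX2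
    push_neg at hX2
    have hsub : {δ | δ ∈ S ∧ X ∩ Set.Iio δ = B ξ δ} ⊆ Set.Iio κ.ord := fun δ hδ => hS.1 hδ.1
    obtain ⟨Cξ, hCξ, hdisj⟩ := hX2 hsub
    exact ⟨X, Cξ, hX1, hCξ, fun δ hδS hδB hδC => Set.eq_empty_iff_forall_notMem.mp hdisj δ ⟨⟨hδS, hδB⟩, hδC⟩⟩
  choose Xf Cc hXsub hCcclub hCdisj using hfail
  -- the coded set
  set X : Set Ordinal := {γ | ∃ ξ, ξ < κ.ord ∧ ∃ β ∈ Xf ξ, γ = q ξ β} with hXdef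
  have hXsubκ : X ⊆ Set.Iio κ.ord := by
    rintro γ ⟨ξ, hξ, β, hβ, rfl⟩
    exact hqlt ξ hξ β (hXsub ξ hβ)
  obtain ⟨C, hCclub, hCguess⟩ := hguess X hXsubκ
  have hW := main_club hreg hunc hCclub hqlt hCcclub
  obtain ⟨α, hαS, hαW⟩ := hS.2 _ hW
  simp only [Set.mem_setOf_eq] at hαW
  obtain ⟨hακ, hαC, hαq, hαCc⟩ := hαW
  have hmem : X ∩ Set.Iio α ∈ 𝒜 α := hCguess α ⟨hαC, hαS⟩
  obtain ⟨ζ, hζα, hζe⟩ := he α hαS _ hmem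
  have hXζ : Xf ζ ∩ Set.Iio α = B ζ α := by
    ext β
    simp only [hB, Set.mem_inter_iff, Set.mem_Iio, Set.mem_setOf_eq]
    constructor
    · rintro ⟨hβX, hβα⟩
      refine ⟨hβα, ?_⟩
      rw [hζe]
      exact ⟨⟨ζ, hζα.trans hακ, β, hβX, rfl⟩, hαq ζ hζα β hβα⟩
    · rintro ⟨hβα, hqβ⟩
      rw [hζe] at hqβ
      obtain ⟨⟨ξ', hξ', β', hβ', heq⟩, -⟩ := hqβ
      obtain ⟨h1, h2⟩ := hqinj ζ β ξ' β' (hζα.trans hακ) (hβα.trans hακ) hξ'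
        (hXsub ξ' hβ') heq
      refine ⟨?_, hβα⟩
      rw [h1, h2]
      exact hβ'
  exact hCdisj ζ α hαS hXζ (hαCc ζ hζα)
end

section
/- Suppose: (a) λ = λ^{<λ} is regular; (b) ⟨f_α : α < λ⟩ lists all functions from some ordinal α < λ into λ; (c) S is D-positive where (f) D is a χ⁺-complete filter on λ extending the club filter; (d) ⟨u_α : α ∈ S⟩ with u_α ⊆ α; (e) χ = sup{|u_α|⁺ : α ∈ S} < λ; and (g) for every g : λ → λ, for a D-positive set of δ ∈ S we have δ = sup{α ∈ u_δ : g↾α ∈ {f_β : β ∈ u_δ}}. Then ◊_D holds. -/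
open Ordinal Set Cardinal

private lemma club_of_unbounded_omega {X : Set Ordinal}
    (hsub : X ⊆ Set.Iio (Ordinal.omega0)) (hunb : ∀ a < Ordinal.omega0, ∃ b ∈ X, a ≤ b) :
    IsClubIn Ordinal.omega0 X := by
  refine ⟨hsub, hunb, ?_⟩
  intro a ha hne hsup
  obtain ⟨n, rfl⟩ := Ordinal.lt_omega0.1 ha
  cases n with
  | zero =>
    obtain ⟨x, -, hx⟩ := hne
    exact absurd hx (by simp)
  | succ k =>
    exfalso
    have hle : sSup (X ∩ Set.Iio ((k + 1 : ℕ) : Ordinal)) ≤ (k : Ordinal) := by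
      apply csSup_le hne
      intro x hx
      have hx' : x < (k : Ordinal) + 1 := by
        have := hx.2
        simpa [Nat.cast_succ] using this
      rw [Ordinal.add_one_eq_succ] at hx'
      exact Order.lt_succ_iff.1 hx'
    rw [hsup] at hle
    have : ((k : ℕ) : Ordinal) < ((k + 1 : ℕ) : Ordinal) := by
      exact_mod_cast Nat.lt_succ_self k
    exact absurd (lt_of_lt_of_le this hle) (lt_irrefl _)

private lemma omega_filter_bad {D : Set (Set Ordinal.{0})}
    (hD : IsFilterOn Ordinal.omega0 D) (hDclub : ExtendsClubs Ordinal.omega0 D) : False := by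
  set Ev : Set Ordinal := {o | o < Ordinal.omega0 ∧ ∃ n : ℕ, o = ((2 * n : ℕ) : Ordinal)} with hEv
  set Od : Set Ordinal := {o | o < Ordinal.omega0 ∧ ∃ n : ℕ, o = ((2 * n + 1 : ℕ) : Ordinal)} with hOd
  have hEvc : IsClubIn Ordinal.omega0 Ev := by
    apply club_of_unbounded_omega (fun x hx => hx.1)
    intro a ha
    obtain ⟨m, rfl⟩ := Ordinal.lt_omega0.1 ha
    refine ⟨((2 * m : ℕ) : Ordinal), ⟨?_, ⟨m, rfl⟩⟩, ?_⟩
    · exact Ordinal.nat_lt_omega0 _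
    · exact_mod_cast Nat.le_mul_of_pos_left m (by norm_num)
  have hOdc : IsClubIn Ordinal.omega0 Od := by
    apply club_of_unbounded_omega (fun x hx => hx.1)
    intro a ha
    obtain ⟨m, rfl⟩ := Ordinal.lt_omega0.1 ha
    refine ⟨((2 * m + 1 : ℕ) : Ordinal), ⟨?_, ⟨m, rfl⟩⟩, ?_⟩
    · exact Ordinal.nat_lt_omega0 _
    · exact_mod_cast Nat.le_succ_of_le (Nat.le_mul_of_pos_left m (by norm_num))
  have h1 : Ev ∈ D := hDclub _ hEvc
  have h2 : Od ∈ D := hDclub _ hOdc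
  have h3 : Ev ∩ Od ∈ D := hD.2.2.2.2 _ h1 _ h2
  have h4 : Ev ∩ Od = ∅ := by
    ext x
    simp only [Set.mem_inter_iff, Set.mem_empty_iff_false, iff_false]
    rintro ⟨⟨-, n, rfl⟩, -, m, hm⟩
    have : 2 * n = 2 * m + 1 := by exact_mod_cast hm
    omega
  rw [h4] at h3
  exact hD.2.2.1 h3
theorem stmt6 (l χ : Cardinal.{0}) (hreg : l.IsRegular) (hpow : l ^< l = l)
    (f : Ordinal → Ordinal × (Ordinal → Ordinal))
    (hf1 : ∀ β < l.ord, (f β).1 < l.ord ∧ ∀ α < (f β).1, (f β).2 α < l.ord)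
    (hf2 : ∀ β < l.ord, ∀ g : Ordinal → Ordinal, (∀ α < β, g α < l.ord) →
        ∃ γ < l.ord, (f γ).1 = β ∧ ∀ α < β, (f γ).2 α = g α)
    (D : Set (Set Ordinal.{0})) (hD : IsFilterOn l.ord D) (hDclub : ExtendsClubs l.ord D)
    (hcomp : CompleteFor (Order.succ χ) l.ord D)
    (S : Set Ordinal) (hS : DPos l.ord D S)
    (u : Ordinal → Set Ordinal) (hu : ∀ α ∈ S, u α ⊆ Set.Iio α)
    (hχ : Cardinal.lift.{1} χ = ⨆ α : S, Order.succ (Cardinal.mk ↥(u α.1)))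
    (hχl : χ < l)
    (hguess : ∀ g : Ordinal → Ordinal, (∀ α < l.ord, g α < l.ord) →
        DPos l.ord D {δ | δ ∈ S ∧ ∀ b < δ, ∃ α ∈ u δ, b ≤ α ∧
          ∃ β ∈ u δ, (f β).1 = α ∧ ∀ ζ < α, (f β).2 ζ = g ζ}) :
    DiamondFilter l.ord D := by
  classical
  by_contra hnd
  -- basic facts
  have hSsub : S ⊆ Set.Iio l.ord := hS.1
  have hlim : Order.IsSuccLimit l.ord := Cardinal.isSuccLimit_ord hreg.aleph0_le
  have hlpos : (0 : Ordinal) < l.ord := hlim.pos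
  have hsucclt : ∀ {x : Ordinal}, x < l.ord → x + 1 < l.ord := fun hx => by
    rw [Ordinal.add_one_eq_succ]; exact hlim.succ_lt hx
  -- dispose of the countable case
  rcases eq_or_lt_of_le hreg.aleph0_le with heq | hluc
  · rw [← heq, Cardinal.ord_aleph0] at hD hDclub
    exact omega_filter_bad hD hDclub
  -- S is nonempty
  have hSne : S.Nonempty := by
    rcases Set.eq_empty_or_nonempty S with h | h
    · exfalso
      have h2 := hS.2
      rw [h, Set.diff_empty] at h2
      exact h2 hD.2.1
    · exact h
  obtain ⟨δ₀, hδ₀⟩ := hSne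
  -- the `u δ` are of size < χ
  have hbdd : BddAbove (Set.range fun α : S => Order.succ (Cardinal.mk ↥(u α.1))) := by
    refine ⟨Order.succ (Cardinal.lift.{1} l), ?_⟩
    rintro _ ⟨α, rfl⟩
    refine Order.succ_le_succ ?_
    have h1 : Cardinal.mk ↥(u α.1) ≤ Cardinal.mk ↥(Set.Iio l.ord) :=
      Cardinal.mk_le_mk_of_subset (fun x hx => Set.mem_Iio.2 ((Set.mem_Iio.1 (hu α.1 α.2 hx)).trans (Set.mem_Iio.1 (hSsub α.2))))
    rwa [Ordinal.mk_Iio_ordinal, Cardinal.card_ord] at h1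
  have husucc : ∀ δ ∈ S, Order.succ (Cardinal.mk ↥(u δ)) ≤ Cardinal.lift.{1} χ := by
    intro δ hδ
    rw [hχ]
    exact le_ciSup hbdd (⟨δ, hδ⟩ : S)
  have hχ0 : χ ≠ 0 := by
    intro h
    have h1 := lt_of_lt_of_le (Order.bot_lt_succ (Cardinal.mk ↥(u δ₀))) (husucc δ₀ hδ₀)
    rw [h] at h1
    simp at h1
  -- the pairing bijection
  have hmk : Cardinal.mk (↥(Set.Iio χ.ord) × ↥(Set.Iio l.ord)) = Cardinal.mk ↥(Set.Iio l.ord) := by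
    rw [Cardinal.mk_prod, Cardinal.lift_id, Cardinal.lift_id, Ordinal.mk_Iio_ordinal,
      Ordinal.mk_Iio_ordinal, Cardinal.card_ord, Cardinal.card_ord]
    exact Cardinal.mul_eq_right (Cardinal.aleph0_le_lift.2 hreg.aleph0_le)
      (Cardinal.lift_le.2 hχl.le) (by simpa using hχ0)
  obtain ⟨e⟩ := Cardinal.eq.1 hmk
  set pr : Ordinal → Ordinal → Ordinal := fun i ζ =>
    if h : i < χ.ord ∧ ζ < l.ord then (e (⟨i, h.1⟩, ⟨ζ, h.2⟩)).1 else 0 with hpr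
  have prlt : ∀ i ζ, pr i ζ < l.ord := by
    intro i ζ
    simp only [hpr]
    by_cases h : i < χ.ord ∧ ζ < l.ord
    · rw [dif_pos h]; exact (e (⟨i, h.1⟩, ⟨ζ, h.2⟩)).2
    · rw [dif_neg h]; exact hlpos
  have prval : ∀ (i ζ : Ordinal) (h1 : i < χ.ord) (h2 : ζ < l.ord),
      pr i ζ = (e (⟨i, h1⟩, ⟨ζ, h2⟩)).1 := by
    intro i ζ h1 h2
    simp only [hpr]
    exact dif_pos ⟨h1, h2⟩
  -- the club of closure points
  set C : Set Ordinal := {δ | δ < l.ord ∧ 0 < δ ∧ (∀ ζ < δ, ζ + 1 < δ) ∧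
    ∀ ζ < δ, ∀ i < χ.ord, pr i ζ < δ} with hC
  have hCclub : IsClubIn l.ord C := by
    have hnxt : ∀ x < l.ord, ∃ y < l.ord, x < y ∧ ∀ ζ < x, ∀ i < χ.ord, pr i ζ < y := by
      intro x hx
      set F : χ.ord.ToType × x.ToType → Ordinal := fun p =>
        pr ((Ordinal.ToType.mk (o := χ.ord)).symm p.1).1 ((Ordinal.ToType.mk (o := x)).symm p.2).1 + 1
        with hF
      have hFlt : ∀ p, F p < l.ord := fun p => hsucclt (prlt _ _)
      have hcard : Cardinal.mk (χ.ord.ToType × x.ToType) < l := by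
        rw [Cardinal.mk_prod, Cardinal.lift_id, Cardinal.lift_id, Cardinal.mk_toType,
          Cardinal.mk_toType, Cardinal.card_ord]
        exact Cardinal.mul_lt_of_lt hreg.aleph0_le hχl (Cardinal.lt_ord.1 hx)
      have hsup : (⨆ p, F p) < l.ord := Cardinal.iSup_lt_ord_of_isRegular hreg hcard hFlt
      refine ⟨max (x + 1) (⨆ p, F p), max_lt (hsucclt hx) hsup, ?_, ?_⟩
      · refine lt_of_lt_of_le ?_ (le_max_left _ _)
        rw [Ordinal.add_one_eq_succ]
        exact Order.lt_succ x
      · intro ζ hζ i hi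
        have hb : BddAbove (Set.range F) := ⟨l.ord, by rintro _ ⟨p, rfl⟩; exact (hFlt p).le⟩
        have hle : F ((Ordinal.ToType.mk (o := χ.ord)) ⟨i, hi⟩,
            (Ordinal.ToType.mk (o := x)) ⟨ζ, hζ⟩) ≤ ⨆ p, F p := le_ciSup hb _
        rw [hF] at hle
        simp only [OrderIso.symm_apply_apply] at hle
        calc pr i ζ < pr i ζ + 1 := by rw [Ordinal.add_one_eq_succ]; exact Order.lt_succ _
          _ ≤ ⨆ p, F p := hle
          _ ≤ max (x + 1) (⨆ p, F p) := le_max_right _ _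
    refine ⟨fun δ h => by rw [hC] at h; exact h.1, ?_, ?_⟩
    · -- unbounded
      intro a ha
      have hstep : ∀ x, ∃ y, x < l.ord →
          (y < l.ord ∧ x < y ∧ ∀ ζ < x, ∀ i < χ.ord, pr i ζ < y) := by
        intro x
        by_cases hx : x < l.ord
        · obtain ⟨y, h1, h2, h3⟩ := hnxt x hx
          exact ⟨y, fun _ => ⟨h1, h2, h3⟩⟩
        · exact ⟨0, fun h => absurd h hx⟩
      choose nxt hnxt' using hstep
      set b : ℕ → Ordinal := fun n => Nat.rec (a + 1) (fun _ ih => nxt ih) n with hbdef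
      have hb0 : b 0 = a + 1 := rfl
      have hbs : ∀ n, b (n + 1) = nxt (b n) := fun n => rfl
      have hblt : ∀ n, b n < l.ord := by
        intro n
        induction n with
        | zero => rw [hb0]; exact hsucclt ha
        | succ m ih =>
          rw [hbs]
          exact (hnxt' (b m) ih).1
      have hbbdd : BddAbove (Set.range b) := ⟨l.ord, by rintro _ ⟨n, rfl⟩; exact (hblt n).le⟩
      have hbled : ∀ n, b n ≤ ⨆ m, b m := fun n => le_ciSup hbbdd n
      have hdlt : (⨆ m, b m) < l.ord :=
        Cardinal.iSup_lt_ord_of_isRegular hreg (by rw [Cardinal.mk_nat]; exact hluc) hblt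
      have hlts : ∀ ζ, ζ < (⨆ m, b m) → ∃ n, ζ < b n := fun ζ hζ => Ordinal.lt_iSup_iff.1 hζ
      refine ⟨⨆ m, b m, ?_, ?_⟩
      · rw [hC, Set.mem_setOf_eq]
        refine ⟨hdlt, ?_, ?_, ?_⟩
        · refine lt_of_lt_of_le ?_ (hbled 0)
          rw [hb0]
          exact lt_of_le_of_lt (zero_le (a := a)) (by rw [Ordinal.add_one_eq_succ]; exact Order.lt_succ a)
        · intro ζ hζ
          obtain ⟨n, hn⟩ := hlts ζ hζ
          have h1 : ζ + 1 ≤ b n := by rw [Ordinal.add_one_eq_succ]; exact Order.succ_le_of_lt hn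
          have h2 : b n < b (n + 1) := by rw [hbs]; exact (hnxt' (b n) (hblt n)).2.1
          exact lt_of_le_of_lt h1 (lt_of_lt_of_le h2 (hbled (n + 1)))
        · intro ζ hζ i hi
          obtain ⟨n, hn⟩ := hlts ζ hζ
          have h2 : pr i ζ < nxt (b n) := (hnxt' (b n) (hblt n)).2.2 ζ hn i hi
          rw [← hbs] at h2
          exact lt_of_lt_of_le h2 (hbled (n + 1))
      · refine le_trans (le_self_add (a := a) (b := 1)) ?_
        rw [← hb0]
        exact hbled 0
    · -- closed
      intro a ha hne hsup
      have key : ∀ ζ < a, ∃ x, x ∈ C ∧ x < a ∧ ζ < x := by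
        intro ζ hζ
        by_contra hcon
        push_neg at hcon
        have hle : sSup (C ∩ Set.Iio a) ≤ ζ := by
          refine csSup_le hne ?_
          intro x hx
          obtain ⟨h1, h2⟩ := hx
          exact hcon x h1 h2
        rw [hsup] at hle
        exact absurd hζ (not_lt.2 hle)
      rw [hC, Set.mem_setOf_eq]
      obtain ⟨x0, hx0⟩ := hne
      obtain ⟨hx0C, hx0a⟩ := hx0
      rw [hC, Set.mem_setOf_eq] at hx0C
      refine ⟨ha, lt_trans hx0C.2.1 hx0a, ?_, ?_⟩
      · intro ζ hζ
        obtain ⟨x, hxC, hxa, hζx⟩ := key ζ hζ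
        rw [hC, Set.mem_setOf_eq] at hxC
        exact lt_trans (hxC.2.2.1 ζ hζx) hxa
      · intro ζ hζ i hi
        obtain ⟨x, hxC, hxa, hζx⟩ := key ζ hζ
        rw [hC, Set.mem_setOf_eq] at hxC
        exact lt_trans (hxC.2.2.2 ζ hζx i hi) hxa
  have hCD : C ∈ D := hDclub C hCclub
  -- every candidate sequence has a defeater
  have defeatEx : ∀ c : Ordinal → Ordinal → Ordinal, (∀ α ∈ S, ∀ β < α, c α β < l.ord) →
      ∃ g : Ordinal → Ordinal, (∀ α < l.ord, g α < l.ord) ∧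
        (Set.Iio l.ord \ {α | α ∈ S ∧ ∀ β < α, g β = c α β}) ∈ D := by
    intro c hc
    by_contra h
    push_neg at h
    apply hnd
    refine ⟨S, hS, c, hc, ?_⟩
    intro g hg
    exact ⟨fun α hα => hSsub hα.1, h g hg⟩
  -- candidate machinery
  set trunc : Ordinal → Ordinal := fun v => if v < l.ord then v else 0 with htrunc
  set candAux : Set Ordinal → Ordinal → Ordinal := fun s ξ =>
    if h : s.Nonempty then trunc ((f h.some).2 ξ) else 0 with hcandAux
  set aliveSet : (Ordinal → Ordinal → Ordinal) → Ordinal → Ordinal → Ordinal → Set Ordinal :=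
    fun P i δ ζ => {β | β ∈ u δ ∧
      (∀ j < i, ∀ ζ' < l.ord, pr j ζ' < (f β).1 → (f β).2 (pr j ζ') = P j ζ') ∧
      pr i ζ < (f β).1} with haliveSet
  set cand : (Ordinal → Ordinal → Ordinal) → Ordinal → Ordinal → Ordinal → Ordinal :=
    fun P i δ ζ => candAux (aliveSet P i δ ζ) (pr i ζ) with hcand
  have htrunclt : ∀ v, trunc v < l.ord := by
    intro v
    simp only [htrunc]
    by_cases h : v < l.ord
    · rwa [if_pos h]
    · rw [if_neg h]; exact hlpos
  have hcandlt : ∀ P i δ ζ, cand P i δ ζ < l.ord := by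
    intro P i δ ζ
    simp only [hcand, hcandAux]
    by_cases h : (aliveSet P i δ ζ).Nonempty
    · rw [dif_pos h]; exact htrunclt _
    · rw [dif_neg h]; exact hlpos
  have hcandbd : ∀ (P : Ordinal → Ordinal → Ordinal) (i : Ordinal),
      ∀ α ∈ S, ∀ β < α, cand P i α β < l.ord := fun P i α _ β _ => hcandlt P i α β
  -- the recursion
  set G : Ordinal → Ordinal → Ordinal := WellFounded.fix Ordinal.lt_wf
    (fun i IH => Classical.choose (defeatEx
      (cand (fun j ζ => if h : j < i then IH j h ζ else 0) i) (hcandbd _ _))) with hG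
  have candEq : ∀ i, cand (fun j ζ => if h : j < i then G j ζ else 0) i = cand G i := by
    intro i
    funext δ ζ
    simp only [hcand]
    have hset : aliveSet (fun j ζ => if h : j < i then G j ζ else 0) i δ ζ
        = aliveSet G i δ ζ := by
      simp only [haliveSet]
      ext β
      simp only [Set.mem_setOf_eq]
      constructor
      · rintro ⟨h1, h2, h3⟩
        refine ⟨h1, fun j hj ζ' hζ' hp => ?_, h3⟩
        have := h2 j hj ζ' hζ' hp
        rwa [dif_pos hj] at this
      · rintro ⟨h1, h2, h3⟩
        refine ⟨h1, fun j hj ζ' hζ' hp => ?_, h3⟩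
        rw [dif_pos hj]
        exact h2 j hj ζ' hζ' hp
    rw [hset]
  have Gspec : ∀ i, (∀ α < l.ord, G i α < l.ord) ∧
      (Set.Iio l.ord \ {α | α ∈ S ∧ ∀ β < α, G i β = cand G i α β}) ∈ D := by
    intro i
    have heq : G i = Classical.choose (defeatEx
        (cand (fun j ζ => if h : j < i then G j ζ else 0) i) (hcandbd _ _)) := by
      rw [hG]
      exact WellFounded.fix_eq _ _ i
    have h := Classical.choose_spec (defeatEx
      (cand (fun j ζ => if h : j < i then G j ζ else 0) i) (hcandbd _ _))
    rw [← heq, candEq i] at h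
    exact h
  have Gbd : ∀ i, ∀ ζ < l.ord, G i ζ < l.ord := fun i => (Gspec i).1
  -- the coded function
  set gstar : Ordinal → Ordinal := fun ξ =>
    if h : ξ < l.ord then G ((e.symm ⟨ξ, h⟩).1.1 : Ordinal) ((e.symm ⟨ξ, h⟩).2.1 : Ordinal)
    else 0 with hgstar
  have gstarbd : ∀ ξ < l.ord, gstar ξ < l.ord := by
    intro ξ hξ
    simp only [hgstar]
    rw [dif_pos hξ]
    exact Gbd _ _ (e.symm ⟨ξ, hξ⟩).2.2
  have gdecode : ∀ (i ζ : Ordinal), i < χ.ord → ζ < l.ord → gstar (pr i ζ) = G i ζ := by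
    intro i ζ h1 h2
    have hlt : pr i ζ < l.ord := prlt i ζ
    simp only [hgstar]
    rw [dif_pos hlt]
    have hsub : (⟨pr i ζ, hlt⟩ : ↥(Set.Iio l.ord)) = e (⟨i, h1⟩, ⟨ζ, h2⟩) :=
      Subtype.ext (prval i ζ h1 h2)
    rw [hsub, Equiv.symm_apply_apply]
  -- applying the guessing hypothesis
  have hA := hguess gstar gstarbd
  set A : Set Ordinal := {δ | δ ∈ S ∧ ∀ b < δ, ∃ α ∈ u δ, b ≤ α ∧
    ∃ β ∈ u δ, (f β).1 = α ∧ ∀ ζ < α, (f β).2 ζ = gstar ζ} with hAdef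
  -- the large set from completeness
  set N : Ordinal → Set Ordinal := fun i => {α | α ∈ S ∧ ∀ β < α, G i β = cand G i α β}
    with hN
  have hND : ∀ i, (Set.Iio l.ord \ N i) ∈ D := fun i => (Gspec i).2
  have hE : (Set.Iio l.ord ∩ ⋂ i ∈ Set.Iio χ.ord, (Set.Iio l.ord \ N i)) ∈ D := by
    refine hcomp χ.ord ?_ _ (fun i _ => hND i)
    rw [Cardinal.card_ord]
    exact Order.lt_succ χ
  set B : Set Ordinal := (Set.Iio l.ord ∩ ⋂ i ∈ Set.Iio χ.ord, (Set.Iio l.ord \ N i)) ∩ C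
    with hB
  have hBD : B ∈ D := hD.2.2.2.2 _ hE _ hCD
  -- a positive set meets every member of D
  have hmeet : (A ∩ B).Nonempty := by
    rcases Set.eq_empty_or_nonempty (A ∩ B) with h | h
    · exfalso
      have hsub1 : B ⊆ Set.Iio l.ord \ A := by
        intro x hx
        refine ⟨hD.1 _ hBD hx, fun hxA => ?_⟩
        have : x ∈ A ∩ B := ⟨hxA, hx⟩
        rw [h] at this
        exact this
      have : Set.Iio l.ord \ A ∈ D := hD.2.2.2.1 _ hBD _ Set.diff_subset hsub1
      exact hA.2 this
    · exact h
  obtain ⟨δ, hδA, hδB⟩ := hmeet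
  rw [hB] at hδB
  obtain ⟨⟨-, hδE2⟩, hδC⟩ := hδB
  rw [hC, Set.mem_setOf_eq] at hδC
  obtain ⟨-, hδC2, hδC3, hδC4⟩ := hδC
  rw [hAdef, Set.mem_setOf_eq] at hδA
  have hδS : δ ∈ S := hδA.1
  have hδlt : δ < l.ord := hSsub hδS
  have hδN : ∀ i < χ.ord, δ ∉ N i := by
    intro i hi
    have h1 := Set.mem_iInter₂.1 hδE2 i hi
    obtain ⟨-, h2⟩ := h1
    exact h2
  -- stage-by-stage kills
  have stage : ∀ i < χ.ord, ∃ β₀ ∈ u δ,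
      (∃ ζ < l.ord, pr i ζ < (f β₀).1 ∧ (f β₀).2 (pr i ζ) ≠ G i ζ) ∧
      (∀ j < i, ∀ ζ' < l.ord, pr j ζ' < (f β₀).1 → (f β₀).2 (pr j ζ') = G j ζ') := by
    intro i hi
    have hδNi := hδN i hi
    have hex : ∃ ζ, ζ < δ ∧ G i ζ ≠ cand G i δ ζ := by
      by_contra hfa
      push_neg at hfa
      apply hδNi
      rw [hN]
      exact ⟨hδS, fun ζ hζ => hfa ζ hζ⟩
    obtain ⟨ζ, hζδ, hneq⟩ := hex
    have hζl : ζ < l.ord := lt_trans hζδ hδlt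
    have hprδ : pr i ζ < δ := hδC4 ζ hζδ i hi
    have hb : pr i ζ + 1 < δ := hδC3 _ hprδ
    obtain ⟨α, hαu, hbα, β_t, hβtu, hβt1, hβt2⟩ := hδA.2 (pr i ζ + 1) hb
    have hβtmem : β_t ∈ aliveSet G i δ ζ := by
      rw [haliveSet]
      refine ⟨hβtu, ?_, ?_⟩
      · intro j hj ζ' hζ' hp
        rw [hβt1] at hp
        rw [hβt2 _ hp]
        exact gdecode j ζ' (lt_trans hj hi) hζ'
      · rw [hβt1]
        calc pr i ζ < pr i ζ + 1 := by rw [Ordinal.add_one_eq_succ]; exact Order.lt_succ _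
          _ ≤ α := hbα
    have hne' : (aliveSet G i δ ζ).Nonempty := ⟨β_t, hβtmem⟩
    have hβ₀mem := hne'.some_mem
    set β₀ := hne'.some with hβ₀def
    have hβ₀' : β₀ ∈ u δ ∧
        (∀ j < i, ∀ ζ' < l.ord, pr j ζ' < (f β₀).1 → (f β₀).2 (pr j ζ') = G j ζ') ∧
        pr i ζ < (f β₀).1 := by
      rw [haliveSet] at hβ₀mem
      exact hβ₀mem
    have hval : cand G i δ ζ = trunc ((f β₀).2 (pr i ζ)) := by
      simp only [hcand, hcandAux]
      rw [dif_pos hne']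
    have hβ₀lt : β₀ < l.ord := lt_trans (Set.mem_Iio.1 (hu δ hδS hβ₀'.1)) hδlt
    have hvlt : (f β₀).2 (pr i ζ) < l.ord := (hf1 β₀ hβ₀lt).2 _ hβ₀'.2.2
    have htr : trunc ((f β₀).2 (pr i ζ)) = (f β₀).2 (pr i ζ) := by
      simp only [htrunc]
      rw [if_pos hvlt]
    refine ⟨β₀, hβ₀'.1, ⟨ζ, hζl, hβ₀'.2.2, ?_⟩, hβ₀'.2.1⟩
    intro hcontra
    apply hneq
    rw [hval, htr, hcontra]
  -- assemble the injection and derive the contradiction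
  have stage' : ∀ i : ↥(Set.Iio χ.ord), ∃ β₀, β₀ ∈ u δ ∧
      (∃ ζ < l.ord, pr i.1 ζ < (f β₀).1 ∧ (f β₀).2 (pr i.1 ζ) ≠ G i.1 ζ) ∧
      (∀ j < i.1, ∀ ζ' < l.ord, pr j ζ' < (f β₀).1 → (f β₀).2 (pr j ζ') = G j ζ') := by
    intro i
    obtain ⟨β₀, h1, h2, h3⟩ := stage i.1 i.2
    exact ⟨β₀, h1, h2, h3⟩
  choose k hk1 hk2 hk3 using stage'
  have hkinj : Function.Injective (fun i : ↥(Set.Iio χ.ord) => (⟨k i, hk1 i⟩ : ↥(u δ))) := by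
    intro i i' hii
    have hkk : k i = k i' := congrArg Subtype.val hii
    rcases lt_trichotomy i.1 i'.1 with h | h | h
    · exfalso
      obtain ⟨ζ, hζl, hplt, hvne⟩ := hk2 i
      have hcoh := hk3 i' i.1 h ζ hζl (by rw [← hkk]; exact hplt)
      rw [← hkk] at hcoh
      exact hvne hcoh
    · exact Subtype.ext h
    · exfalso
      obtain ⟨ζ, hζl, hplt, hvne⟩ := hk2 i'
      have hcoh := hk3 i i'.1 h ζ hζl (by rw [hkk]; exact hplt)
      rw [hkk] at hcoh
      exact hvne hcoh
  have hineq1 : Cardinal.lift.{1} χ ≤ Cardinal.mk ↥(u δ) := by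
    have h2 := Cardinal.mk_le_of_injective hkinj
    rwa [Ordinal.mk_Iio_ordinal, Cardinal.card_ord] at h2
  have hineq2 := husucc δ hδS
  have hineq3 : Cardinal.lift.{1} χ < Order.succ (Cardinal.mk ↥(u δ)) :=
    lt_of_le_of_lt hineq1 (Order.lt_succ _)
  exact absurd (lt_of_lt_of_le hineq3 hineq2) (lt_irrefl _)
end

section
/- Let λ be regular uncountable, χ < λ with χ > ℵ₀, and for each ordinal α < λ let ⟨u_{α,ε} : ε < χ⟩ be a ⊆-increasing continuous sequence of subsets of α with union α and |u_{α,ε}| ≤ ℵ₀ + |ε|. Then for every limit ordinal δ < λ with cf(δ) ≠ cf(χ) and every function F : δ → δ with F(α) ≥ α for cofinally many α < δ, there exists ε(*) < χ such that the set {α < δ : α ∈ u_{δ,ε(*)} and F(α) ∈ u_{δ,ε(*)}} is unbounded in δ. -/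
open Ordinal Set Cardinal

theorem stmt11 (l χ : Cardinal.{0}) (hreg : l.IsRegular) (hunc : ℵ₀ < l)
    (hχ0 : ℵ₀ < χ) (hχl : χ < l)
    (hcard : ∀ α < l.ord, α.card ≤ χ)
    (u : Ordinal → Ordinal → Set Ordinal)
    (hmono : ∀ α < l.ord, ∀ ε ε' : Ordinal, ε ≤ ε' → ε' < χ.ord → u α ε ⊆ u α ε')
    (hcont : ∀ α < l.ord, ∀ ε < χ.ord, Order.IsSuccLimit ε → u α ε = ⋃ ζ ∈ Set.Iio ε, u α ζ)
    (hunion : ∀ α < l.ord, ⋃ ε ∈ Set.Iio χ.ord, u α ε = Set.Iio α)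
    (hsmall : ∀ α < l.ord, ∀ ε < χ.ord,
        Cardinal.mk ↥(u α ε) ≤ Cardinal.lift.{1} (ℵ₀ + ε.card)) :
    ∀ δ < l.ord, Order.IsSuccLimit δ → δ.cof ≠ χ.ord.cof →
      ∀ F : Ordinal → Ordinal, (∀ α < δ, F α < δ) →
        (∀ b < δ, ∃ α, b ≤ α ∧ α < δ ∧ α ≤ F α) →
        ∃ ε < χ.ord, ∀ b < δ, ∃ α, b ≤ α ∧ α < δ ∧ α ∈ u δ ε ∧ F α ∈ u δ ε := by
  intro δ hδl hδlim hcf F hFδ hFcof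
  -- For every b < δ there is a good α ≥ b together with a level ε capturing α and F α.
  have key : ∀ b : Ordinal, ∃ α ε : Ordinal, b < δ →
      b ≤ α ∧ α < δ ∧ ε < χ.ord ∧ α ∈ u δ ε ∧ F α ∈ u δ ε := by
    intro b
    by_cases hb : b < δ
    · obtain ⟨α, hbα, hαδ, _⟩ := hFcof b hb
      have hα : α ∈ ⋃ ε ∈ Set.Iio χ.ord, u δ ε := by
        rw [hunion δ hδl]; exact hαδ
      have hFα : F α ∈ ⋃ ε ∈ Set.Iio χ.ord, u δ ε := by
        rw [hunion δ hδl]; exact hFδ α hαδ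
      simp only [Set.mem_iUnion, Set.mem_Iio] at hα hFα
      obtain ⟨ε₁, hε₁, hm₁⟩ := hα
      obtain ⟨ε₂, hε₂, hm₂⟩ := hFα
      refine ⟨α, max ε₁ ε₂, fun _ => ⟨hbα, hαδ, max_lt hε₁ hε₂, ?_, ?_⟩⟩
      · exact hmono δ hδl ε₁ _ (le_max_left _ _) (max_lt hε₁ hε₂) hm₁
      · exact hmono δ hδl ε₂ _ (le_max_right _ _) (max_lt hε₁ hε₂) hm₂
    · exact ⟨0, 0, fun h => absurd h hb⟩
  choose A E hAE using key
  rcases lt_trichotomy δ.cof χ.ord.cof with h | h | h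
  · -- cf δ < cf χ: the levels along a fundamental sequence for δ are bounded below χ.ord.
    obtain ⟨f, hf⟩ := Ordinal.exists_fundamental_sequence δ
    set ε' : Ordinal := Ordinal.bsup δ.cof.ord (fun i hi => E (f i hi)) with hε'
    have hεχ : ε' < χ.ord := by
      apply Ordinal.bsup_lt_ord
      · rwa [Cardinal.card_ord]
      · intro i hi
        have hfi : f i hi < δ := hf.lt hi
        exact ((hAE (f i hi)) hfi).2.2.1
    refine ⟨ε', hεχ, fun b hb => ?_⟩
    have hbδ : b < Ordinal.blsub δ.cof.ord f := by rw [hf.blsub_eq]; exact hb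
    obtain ⟨i, hi, hbf⟩ := Ordinal.lt_blsub_iff.1 hbδ
    have hfi : f i hi < δ := hf.lt hi
    obtain ⟨h1, h2, h3, h4, h5⟩ := hAE (f i hi) hfi
    have hle : E (f i hi) ≤ ε' := Ordinal.le_bsup _ i hi
    exact ⟨A (f i hi), le_trans hbf h1, h2,
      hmono δ hδl _ _ hle hεχ h4, hmono δ hδl _ _ hle hεχ h5⟩
  · exact absurd h hcf
  · -- cf δ > cf χ: some level along a fundamental sequence for χ.ord recurs unboundedly.
    obtain ⟨g, hg⟩ := Ordinal.exists_fundamental_sequence χ.ord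
    by_contra hcon
    push_neg at hcon
    -- for each i, the level g i fails, giving a bound below δ
    have hfail : ∀ i (hi : i < χ.ord.cof.ord), ∃ c, c < δ ∧
        ∀ α, c ≤ α → α < δ → α ∈ u δ (g i hi) → F α ∉ u δ (g i hi) := by
      intro i hi
      obtain ⟨c, hc1, hc2⟩ := hcon (g i hi) (hg.lt hi)
      exact ⟨c, hc1, fun α h1 h2 h3 h4 => hc2 α h1 h2 h3 h4⟩
    choose c hc1 hc2 using hfail
    have hB : Ordinal.blsub χ.ord.cof.ord c < δ := by
      apply Ordinal.blsub_lt_ord _ hc1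
      rwa [Cardinal.card_ord]
    obtain ⟨h1, h2, h3, h4, h5⟩ := hAE (Ordinal.blsub χ.ord.cof.ord c) hB
    set α := A (Ordinal.blsub χ.ord.cof.ord c)
    have : E (Ordinal.blsub χ.ord.cof.ord c) < Ordinal.blsub χ.ord.cof.ord g := by
      rw [hg.blsub_eq]; exact h3
    obtain ⟨i, hi, hEg⟩ := Ordinal.lt_blsub_iff.1 this
    refine hc2 i hi α ?_ h2 ?_ ?_
    · exact le_trans (Ordinal.lt_blsub c i hi).le h1
    · exact hmono δ hδl _ _ hEg (hg.lt hi) h4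
    · exact hmono δ hδl _ _ hEg (hg.lt hi) h5
end
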